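/- Consider N systems with quadratic supply rates: suppose for each i, symmetric Qᵢ ⪯ 0 with εᵢ := -λ_max(Qᵢ) ≥ 0, and signals yᵢ(t) ∈ ℝ^n, output scheduling matrices Φ_{y,i}(t), and y(t) = ∑ᵢ Φ_{y,i}(t) yᵢ(t). If σ_Ψ(t) is the largest singular value of Ψ(t) = [Φ_{y,1}(t) ⋯ Φ_{y,N}(t)] and σ̄_Ψ := sup_t σ_Ψ(t) ∈ (0, ∞), then pointwise in t: ∑ᵢ yᵢ(t)ᵀ Qᵢ yᵢ(t) ≤ -(ε_min/σ̄_Ψ²) ‖y(t)‖², where ε_min = min_i εᵢ. -/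

import Mathlib

open Matrix

/-- For a real matrix, `Aᵀ * A` is Hermitian. -/
theorem transpose_mul_self_isHermitian {m n : Type*} [Fintype m] [Fintype n]
    (A : Matrix m n ℝ) : (Aᵀ * A).IsHermitian := by
  rw [← Matrix.conjTranspose_eq_transpose_of_trivial]
  exact Matrix.isHermitian_conjTranspose_mul_self A

/-- Largest eigenvalue of a Hermitian real matrix. -/
noncomputable def lamMax {n : Type*} [Fintype n] [DecidableEq n] {A : Matrix n n ℝ}
    (hA : A.IsHermitian) : ℝ := ⨆ i, hA.eigenvalues i

/-- Square of the largest singular value: `λ_max (Aᵀ A)`. -/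
noncomputable def sigmaMaxSq {m n : Type*} [Fintype m] [Fintype n] [DecidableEq n]
    (A : Matrix m n ℝ) : ℝ := lamMax (transpose_mul_self_isHermitian A)

/-- Square of the smallest singular value: `λ_min (Aᵀ A)`. -/
noncomputable def nuMinSq {m n : Type*} [Fintype m] [Fintype n] [DecidableEq n]
    (A : Matrix m n ℝ) : ℝ := ⨅ i, (transpose_mul_self_isHermitian A).eigenvalues i


lemma dot_self_nonneg {m : Type*} [Fintype m] (x : m → ℝ) : 0 ≤ x ⬝ᵥ x :=
  Finset.sum_nonneg fun i _ => mul_self_nonneg _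

lemma quad_le_lamMaxAux {m : Type*} [Fintype m] [DecidableEq m] {A : Matrix m m ℝ}
    (hA : A.IsHermitian) (x : m → ℝ) :
    x ⬝ᵥ A.mulVec x ≤ (⨆ i, hA.eigenvalues i) * (x ⬝ᵥ x) := by
  cases isEmpty_or_nonempty m
  · simp [dotProduct]
  · set U : Matrix m m ℝ := (hA.eigenvectorUnitary : Matrix m m ℝ) with hU
    set z : m → ℝ := (star U) *ᵥ x with hzdef
    have hsA : star U = Uᵀ := by
      simp [Matrix.star_eq_conjTranspose, Matrix.conjTranspose_eq_transpose_of_trivial]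
    have hz : x ⬝ᵥ A.mulVec x = ∑ i, hA.eigenvalues i * (z i)^2 := by
      conv_lhs => rw [hA.spectral_theorem, Unitary.conjStarAlgAut_apply]
      rw [← Matrix.mulVec_mulVec, ← Matrix.mulVec_mulVec, Matrix.dotProduct_mulVec,
        ← Matrix.mulVec_transpose, hsA]
      rw [← hU, ← hsA, ← hzdef]
      simp only [dotProduct, Matrix.mulVec_diagonal, Function.comp_apply,
        RCLike.ofReal_real_eq_id, id]
      exact Finset.sum_congr rfl fun i _ => by ring
    have hzz : z ⬝ᵥ z = x ⬝ᵥ x := by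
      rw [hzdef, Matrix.dotProduct_mulVec, hsA, Matrix.vecMul_transpose,
        Matrix.mulVec_mulVec, ← hsA]
      rw [show U * star U = 1 from (Matrix.mem_unitaryGroup_iff).mp hA.eigenvectorUnitary.2]
      simp
    rw [hz, ← hzz]
    have : z ⬝ᵥ z = ∑ i, (z i)^2 := by simp [dotProduct, pow_two]
    rw [this, Finset.mul_sum]
    apply Finset.sum_le_sum
    intro i _
    exact mul_le_mul_of_nonneg_right
      (le_ciSup (Set.Finite.bddAbove (Set.finite_range _)) i) (sq_nonneg _)

lemma eig_nonpos_of_negPSD {n : Type*} [Fintype n] [DecidableEq n] {A : Matrix n n ℝ}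
    (hA : A.IsHermitian) (h : (-A).PosSemidef) (i : n) : hA.eigenvalues i ≤ 0 := by
  have h1 := h.dotProduct_mulVec_nonneg (⇑(hA.eigenvectorBasis i))
  simp only [Matrix.neg_mulVec, dotProduct_neg, map_neg] at h1
  have h2 : (0:ℝ) ≤ -(star (⇑(hA.eigenvectorBasis i)) ⬝ᵥ A *ᵥ ⇑(hA.eigenvectorBasis i)) := h1
  rw [hA.eigenvalues_eq i]
  have : RCLike.re (star (⇑(hA.eigenvectorBasis i)) ⬝ᵥ A *ᵥ ⇑(hA.eigenvectorBasis i))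
      = star (⇑(hA.eigenvectorBasis i)) ⬝ᵥ A *ᵥ ⇑(hA.eigenvectorBasis i) := rfl
  rw [this]
  linarith

/-- Pointwise version of Lemma 2: for negative semidefinite `Qᵢ` with `εᵢ = -λ_max(Qᵢ)`,
and `y = ∑ Φ_{y,i} yᵢ` with `σ_max([Φ_{y,1} ⋯ Φ_{y,N}]) ≤ σ̄_Ψ`,
`∑ yᵢᵀ Qᵢ yᵢ ≤ -(ε_min/σ̄_Ψ²) ‖y‖²`. -/
theorem scheduled_Q_bound {N n : ℕ} (hN : 0 < N)
    (Q : Fin N → Matrix (Fin n) (Fin n) ℝ) (hQh : ∀ i, (Q i).IsHermitian)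
    (hQ : ∀ i, (-(Q i)).PosSemidef)
    (Φ : Fin N → Matrix (Fin n) (Fin n) ℝ) (yi : Fin N → Fin n → ℝ)
    (y : Fin n → ℝ) (hy : y = ∑ i, (Φ i).mulVec (yi i))
    (Ψ : Matrix (Fin n) (Fin N × Fin n) ℝ) (hΨ : ∀ i k j, Ψ i (k, j) = Φ k i j)
    (σb : ℝ) (hσb : 0 < σb) (hbound : sigmaMaxSq Ψ ≤ σb ^ 2) :
    ∑ i, yi i ⬝ᵥ (Q i).mulVec (yi i) ≤
      -((Finset.univ.inf' ⟨⟨0, hN⟩, Finset.mem_univ _⟩ fun i => -lamMax (hQh i)) / σb ^ 2) *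
        (y ⬝ᵥ y) := by
  have hεpos : ∀ i : Fin N, lamMax (hQh i) ≤ 0 := fun i =>
    Real.iSup_nonpos (eig_nonpos_of_negPSD (hQh i) (hQ i))
  set ε : ℝ := Finset.univ.inf' ⟨⟨0, hN⟩, Finset.mem_univ _⟩ fun i => -lamMax (hQh i) with hεdef
  have hε0 : 0 ≤ ε := by
    apply Finset.le_inf'
    intro i _
    linarith [hεpos i]
  set z : (Fin N × Fin n) → ℝ := fun p => yi p.1 p.2 with hzdef
  have hyz : y = Ψ *ᵥ z := by
    rw [hy]; funext r
    simp only [Matrix.mulVec, dotProduct, Finset.sum_apply, Fintype.sum_prod_type]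
    exact Finset.sum_congr rfl fun k _ => by
      simp [Matrix.mulVec, dotProduct, hΨ, hzdef]
  have hzz : z ⬝ᵥ z = ∑ i, yi i ⬝ᵥ yi i := by
    simp [dotProduct, Fintype.sum_prod_type, hzdef]
  have hS : 0 ≤ ∑ i, yi i ⬝ᵥ yi i := Finset.sum_nonneg fun i _ => dot_self_nonneg _
  have hyy : y ⬝ᵥ y ≤ σb ^ 2 * ∑ i, yi i ⬝ᵥ yi i := by
    have h1 : z ⬝ᵥ (Ψᵀ * Ψ) *ᵥ z = y ⬝ᵥ y := by
      rw [hyz, ← Matrix.mulVec_mulVec, Matrix.dotProduct_mulVec, Matrix.vecMul_transpose]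
    calc y ⬝ᵥ y = z ⬝ᵥ (Ψᵀ * Ψ) *ᵥ z := h1.symm
      _ ≤ sigmaMaxSq Ψ * (z ⬝ᵥ z) := quad_le_lamMaxAux (transpose_mul_self_isHermitian Ψ) z
      _ ≤ σb ^ 2 * (z ⬝ᵥ z) := mul_le_mul_of_nonneg_right hbound (by rw [hzz]; exact hS)
      _ = _ := by rw [hzz]
  have hmain : ∑ i, yi i ⬝ᵥ (Q i) *ᵥ yi i ≤ -ε * ∑ i, yi i ⬝ᵥ yi i := by
    rw [Finset.mul_sum]
    refine Finset.sum_le_sum fun i _ => ?_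
    have h2 : ε ≤ -lamMax (hQh i) := Finset.inf'_le _ (Finset.mem_univ i)
    calc yi i ⬝ᵥ (Q i) *ᵥ (yi i) ≤ lamMax (hQh i) * (yi i ⬝ᵥ yi i) :=
          quad_le_lamMaxAux (hQh i) _
      _ ≤ -ε * (yi i ⬝ᵥ yi i) := mul_le_mul_of_nonneg_right (by linarith) (dot_self_nonneg _)
  have hy0 : 0 ≤ y ⬝ᵥ y := dot_self_nonneg y
  have hσ2 : (0:ℝ) < σb ^ 2 := by positivity
  have key : -ε * (∑ i, yi i ⬝ᵥ yi i) ≤ -(ε / σb ^ 2) * (y ⬝ᵥ y) := by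
    rw [neg_mul, neg_mul, neg_le_neg_iff, div_mul_eq_mul_div, div_le_iff₀ hσ2]
    calc ε * (y ⬝ᵥ y) ≤ ε * (σb ^ 2 * ∑ i, yi i ⬝ᵥ yi i) := mul_le_mul_of_nonneg_left hyy hε0
      _ = ε * (∑ i, yi i ⬝ᵥ yi i) * σb ^ 2 := by ring
  linarith [hmain, key]
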